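/- Let r = 2s−1 be odd and G = C_{n₁} ⊕ ⋯ ⊕ C_{n_r} with 2 ≤ n_r ∣ ⋯ ∣ n₁, and let g₁,…,g_{r+1} be the zigzag elements (g₁ = e₁, g_{2i} = eᵢ + fᵢ, g_{2i+1} = fᵢ + e_{i+1}, g_{r+1} = e_s). Then for any m = [m₁,…,m_{r+1}] ∈ B(g₁,…,g_{r+1}), the chain of congruences m₁ ≡ −m₂ ≡ m₃ ≡ −m₄ ≡ ⋯ ≡ m_r ≡ −m_{r+1} (mod n_r) holds. -/

import Mathlib

open Finset

/-- Membership in the block monoid `B(g₁,…,g_k)`. -/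
def IsBlock {G : Type*} [AddCommGroup G] {k : ℕ} (g : Fin k → G)
    (m : Fin k → ℕ) : Prop :=
  ∑ i, (m i) • g i = 0

/-- The length `|m| = ∑ᵢ mᵢ`. -/
def blockLen {k : ℕ} (m : Fin k → ℕ) : ℕ := ∑ i, m i

/-- `m` is an atom of the block monoid: nonzero, and not the sum of two
nonzero elements of the monoid. -/
def IsBlockAtom {G : Type*} [AddCommGroup G] {k : ℕ} (g : Fin k → G)
    (m : Fin k → ℕ) : Prop :=
  IsBlock g m ∧ m ≠ 0 ∧
    ∀ a b : Fin k → ℕ, IsBlock g a → IsBlock g b → m = a + b → a = 0 ∨ b = 0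

/-- `m` is a group atom: it belongs to the block monoid and cannot be
written as an integral linear combination of elements of the block monoid
of length strictly smaller than `|m|`. -/
def IsGroupAtom {G : Type*} [AddCommGroup G] {k : ℕ} (g : Fin k → G)
    (m : Fin k → ℕ) : Prop :=
  IsBlock g m ∧
    ¬ ∃ (T : Finset (Fin k → ℕ)) (c : (Fin k → ℕ) → ℤ),
        (∀ b ∈ T, IsBlock g b ∧ blockLen b < blockLen m) ∧
        (∀ i, (m i : ℤ) = ∑ b ∈ T, c b * (b i))

/-- The zigzag elements `g₁,…,g_{r+1}` (0-indexed) in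
`G = C_{n₁} ⊕ ⋯ ⊕ C_{n_{2s-1}}`: `g₁ = e₁`, `g_{2i} = eᵢ + fᵢ`,
`g_{2i+1} = fᵢ + e_{i+1}` for `i = 1,…,s-1`, and `g_{2s} = e_s`.
Coordinates `0,…,s-1` correspond to `e₁,…,e_s` and coordinates
`s,…,2s-2` to `f₁,…,f_{s-1}`. -/
def zigzagOdd (s : ℕ) (n : Fin (2*s-1) → ℕ) :
    Fin (2*s) → ∀ c : Fin (2*s-1), ZMod (n c) :=
  fun t => fun c =>
    if c.val = t.val / 2 then 1
    else if 1 ≤ t.val ∧ t.val ≤ 2*s-2 ∧ c.val = s + (t.val - 1)/2 then 1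
    else 0

theorem zigzagOdd_chain_congruence (s : ℕ) (hs : 1 ≤ s)
    (n : Fin (2*s-1) → ℕ)
    (hdvd : ∀ i j : Fin (2*s-1), i ≤ j → n j ∣ n i)
    (h2 : 2 ≤ n ⟨2*s-2, by omega⟩)
    (m : Fin (2*s) → ℕ) (hm : IsBlock (zigzagOdd s n) m) :
    ∀ t u : Fin (2*s),
      ((-1 : ℤ) ^ t.val * (m t : ℤ)) ≡ ((-1 : ℤ) ^ u.val * (m u : ℤ))
        [ZMOD (n ⟨2*s-2, by omega⟩ : ℤ)] := by
  have hc : ∀ c : Fin (2*s-1), ∑ t : Fin (2*s), (m t) • zigzagOdd s n t c = 0 := by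
    intro c
    have := congrFun hm c
    simpa using this
  have key : ∀ t : ℕ, (h : t + 1 < 2*s) →
      ((n ⟨2*s-2, by omega⟩ : ℤ)) ∣ ((m ⟨t, by omega⟩ : ℤ) + (m ⟨t+1, h⟩ : ℤ)) := by
    intro t ht
    obtain ⟨c, hcs, hchar⟩ : ∃ c : Fin (2*s-1),
        c.val ≤ 2*s-2 ∧ ∀ u : Fin (2*s), zigzagOdd s n u c =
          if u.val = t ∨ u.val = t+1 then 1 else 0 := by
      rcases Nat.even_or_odd t with ⟨i, hi⟩ | ⟨j, hj⟩
      · refine ⟨⟨i, by omega⟩, by omega, ?_⟩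
        intro u
        have hu := u.isLt
        simp only [zigzagOdd]
        split_ifs <;> first | rfl | (exfalso; omega)
      · refine ⟨⟨s + j, by omega⟩, by omega, ?_⟩
        intro u
        have hu := u.isLt
        simp only [zigzagOdd]
        split_ifs <;> first | rfl | (exfalso; omega)
    set a : Fin (2*s) := ⟨t, by omega⟩ with hadef
    set b : Fin (2*s) := ⟨t+1, ht⟩ with hbdef
    have hne : a ≠ b := by simp [hadef, hbdef, Fin.ext_iff]
    have hterm : ∀ u : Fin (2*s), m u • zigzagOdd s n u c
        = (if u = a then ((m a : ℕ) : ZMod (n c)) else 0)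
          + (if u = b then ((m b : ℕ) : ZMod (n c)) else 0) := by
      intro u
      rw [hchar u]
      by_cases hua : u = a
      · have h1 : u.val = t ∨ u.val = t+1 := Or.inl (by rw [hua])
        simp [h1, hua, hne, hadef, hbdef]
      · by_cases hub : u = b
        · have h1 : u.val = t ∨ u.val = t+1 := Or.inr (by rw [hub])
          simp [h1, hub, hua, hne.symm, hadef, hbdef]
        · have h1 : ¬(u.val = t ∨ u.val = t+1) := by
            simp only [Fin.ext_iff, hadef, hbdef] at hua hub
            omega
          simp [h1, hua, hub]
    have hsum := hc c
    rw [Finset.sum_congr rfl (fun u _ => hterm u), Finset.sum_add_distrib,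
      Finset.sum_ite_eq' Finset.univ a, Finset.sum_ite_eq' Finset.univ b] at hsum
    simp only [Finset.mem_univ, if_true] at hsum
    have hzero : ((m a + m b : ℕ) : ZMod (n c)) = 0 := by push_cast; exact hsum
    have hdc : (n c) ∣ m a + m b := (CharP.cast_eq_zero_iff (ZMod (n c)) (n c) _).mp hzero
    have hNc : n ⟨2*s-2, by omega⟩ ∣ n c := hdvd c ⟨2*s-2, by omega⟩ (by
      show c.val ≤ 2*s-2
      omega)
    have : (n ⟨2*s-2, by omega⟩ : ℕ) ∣ m a + m b := dvd_trans hNc hdc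
    exact_mod_cast Int.natCast_dvd_natCast.mpr this
  have chain : ∀ t : ℕ, (h : t < 2*s) →
      ((-1:ℤ)^t * (m ⟨t, h⟩ : ℤ)) ≡ (m ⟨0, by omega⟩ : ℤ)
        [ZMOD ((n ⟨2*s-2, by omega⟩ : ℤ))] := by
    intro t
    induction t with
    | zero => intro h; simp
    | succ t ih =>
      intro h
      have h' : t < 2*s := by omega
      have hk := key t h
      have hstep : ((-1:ℤ)^(t+1) * (m ⟨t+1, h⟩ : ℤ)) ≡ ((-1:ℤ)^t * (m ⟨t, h'⟩ : ℤ))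
          [ZMOD ((n ⟨2*s-2, by omega⟩ : ℤ))] := by
        rw [Int.modEq_iff_dvd]
        obtain ⟨k, hkk⟩ := hk
        exact Dvd.intro ((-1:ℤ)^t * k) (by linear_combination (-(-1:ℤ)^t) * hkk)
      exact hstep.trans (ih h')
  intro t u
  have h1 := chain t.val t.isLt
  have h2' := chain u.val u.isLt
  simp only [Fin.eta] at h1 h2'
  exact h1.trans h2'.symm
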